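/- Let (X, 𝓑, μ, f) be a dissipative system of bounded distortion generated by W, with f bijective and both f and f⁻¹ satisfying condition (⋆), and let 1 ≤ p < ∞. If condition 𝓗𝓒 holds, i.e. limsup_{n→∞} sup_{k∈ℤ} (μ(f^k(W))/μ(f^{k+n}(W)))^{1/n} < 1, then the composition operator T_f on L^p(X, μ) has spectral radius lim_{n→∞} ‖T_f^n‖^{1/n} strictly less than 1 (T_f is a contraction). -/

import Mathlib

open MeasureTheory Filter Set Function Topology ENNReal

noncomputable section

namespace GHShadow

/-- The shadowing property for an invertible bounded linear operator. -/
def HasShadowing {E : Type*} [NormedAddCommGroup E] [NormedSpace ℝ E]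
    (T : E ≃L[ℝ] E) : Prop :=
  ∀ ε : ℝ, 0 < ε → ∃ δ : ℝ, 0 < δ ∧ ∀ x : ℤ → E,
    (∀ n : ℤ, ‖T (x n) - x (n + 1)‖ ≤ δ) →
      ∃ y : E, ∀ n : ℤ, ‖(T ^ n) y - x n‖ < ε

/-- `lim ‖Tⁿ‖^{1/n}` exists and is `< 1`. -/
def SpectralRadiusLtOne {E : Type*} [NormedAddCommGroup E] [NormedSpace ℝ E]
    (T : E →L[ℝ] E) : Prop :=
  ∃ r : ℝ, r < 1 ∧ Tendsto (fun n : ℕ => ‖T ^ n‖ ^ (1 / (n : ℝ))) atTop (nhds r)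

/-- The restriction of `T` to `M` has spectral radius `< 1`
(equivalently, is a proper contraction in an equivalent norm). -/
def ContractsOn {E : Type*} [NormedAddCommGroup E] [NormedSpace ℝ E]
    (T : E ≃L[ℝ] E) (M : Submodule ℝ E) : Prop :=
  ∃ C : ℝ, 0 < C ∧ ∃ t : ℝ, 0 < t ∧ t < 1 ∧
    ∀ n : ℕ, ∀ x ∈ M, ‖(T ^ n) x‖ ≤ C * t ^ n * ‖x‖

def GeneralizedHyperbolic {E : Type*} [NormedAddCommGroup E] [NormedSpace ℝ E]
    (T : E ≃L[ℝ] E) : Prop :=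
  ∃ M N : Submodule ℝ E, IsClosed (M : Set E) ∧ IsClosed (N : Set E) ∧
    IsCompl M N ∧ (∀ x ∈ M, T x ∈ M) ∧ (∀ x ∈ N, T.symm x ∈ N) ∧
    ContractsOn T M ∧ ContractsOn T.symm N

variable {X : Type*} [MeasurableSpace X]

/-- image of `B` under the `k`-th iterate of the invertible map `f`. -/
def img (f : Equiv.Perm X) (k : ℤ) (B : Set X) : Set X := ⇑(f ^ k) '' B

/-- `(X, 𝓑, μ, f)` is a dissipative system generated by `W`. -/
structure IsDissipative (μ : Measure X) (f : Equiv.Perm X) (W : Set X) : Prop where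
  sigmaFin : SigmaFinite μ
  meas_f : Measurable f
  meas_symm : Measurable f.symm
  meas_W : MeasurableSet W
  pos : 0 < μ W
  fin : μ W < ⊤
  disj : Pairwise fun k l : ℤ => Disjoint (img f k W) (img f l W)
  cover : (⋃ k : ℤ, img f k W) = univ

/-- `f` is of bounded distortion on `W` with constant `K`. -/
def BoundedDistortion (μ : Measure X) (f : Equiv.Perm X) (W : Set X) (K : ℝ≥0∞) : Prop :=
  ∀ k : ℤ, ∀ B : Set X, MeasurableSet B → B ⊆ W →
    (1 / K) * (μ (img f k W) * μ B) ≤ μ (img f k B) * μ W ∧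
      μ (img f k B) * μ W ≤ K * (μ (img f k W) * μ B)

/-- condition (⋆) for a transformation `g`. -/
def CondStar (μ : Measure X) (g : X → X) : Prop :=
  ∃ c : ℝ≥0∞, 0 < c ∧ c ≠ ⊤ ∧ ∀ B : Set X, MeasurableSet B → μ (g ⁻¹' B) ≤ c * μ B

/-- condition 𝓗𝓒. -/
def CondHC (μ : Measure X) (f : Equiv.Perm X) (W : Set X) : Prop :=
  limsup (fun n : ℕ =>
    ⨆ k : ℤ, (μ (img f k W) / μ (img f (k + (n : ℤ)) W)) ^ (1 / (n : ℝ))) atTop < 1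

/-- condition 𝓗𝓓. -/
def CondHD (μ : Measure X) (f : Equiv.Perm X) (W : Set X) : Prop :=
  1 < liminf (fun n : ℕ =>
    ⨅ k : ℤ, (μ (img f k W) / μ (img f (k + (n : ℤ)) W)) ^ (1 / (n : ℝ))) atTop

/-- condition 𝓖𝓗. -/
def CondGH (μ : Measure X) (f : Equiv.Perm X) (W : Set X) : Prop :=
  limsup (fun n : ℕ =>
      ⨆ m : ℕ, (μ (img f (-(m : ℤ) - (n : ℤ)) W) / μ (img f (-(m : ℤ)) W)) ^ (1 / (n : ℝ)))
      atTop < 1 ∧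
  1 < liminf (fun n : ℕ =>
      ⨅ m : ℕ, (μ (img f (m : ℤ) W) / μ (img f ((m : ℤ) + (n : ℤ)) W)) ^ (1 / (n : ℝ))) atTop

/-- `T` represents the composition operator `φ ↦ φ ∘ f` on `L^p(X,μ)`. -/
def RepsComp (μ : Measure X) (p : ℝ≥0∞) [Fact (1 ≤ p)] (f : X → X)
    (T : Lp ℝ p μ ≃L[ℝ] Lp ℝ p μ) : Prop :=
  ∀ φ : Lp ℝ p μ, ⇑(T φ) =ᵐ[μ] fun x => (φ : X → ℝ) (f x)


set_option linter.unusedSectionVars false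

section MyHelpers

variable {X : Type*} [MeasurableSpace X]

lemma measurable_zpow {f : Equiv.Perm X} (hf : Measurable f) (hf' : Measurable f.symm)
    (k : ℤ) : Measurable ⇑(f ^ k) := by
  induction k using Int.induction_on with
  | zero => simpa using measurable_id
  | succ n ih =>
      have h : (f ^ ((n : ℤ) + 1)) = f ^ (n : ℤ) * f := zpow_add_one f n
      rw [h, Equiv.Perm.coe_mul]
      exact ih.comp hf
  | pred n ih =>
      have h : (f ^ (-(n : ℤ) - 1)) = f ^ (-(n : ℤ)) * f⁻¹ := zpow_sub_one f (-n)
      rw [h, Equiv.Perm.coe_mul]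
      have h2 : ⇑(f⁻¹) = ⇑f.symm := rfl
      rw [h2]
      exact ih.comp hf'

lemma img_measurableSet {f : Equiv.Perm X} (hf : Measurable f) (hf' : Measurable f.symm)
    (k : ℤ) {B : Set X} (hB : MeasurableSet B) : MeasurableSet (img f k B) := by
  rw [img, Equiv.image_eq_preimage_symm]
  have h2 : ⇑(f ^ k).symm = ⇑(f ^ (-k)) := by rw [zpow_neg]; rfl
  rw [h2]
  exact hB.preimage (measurable_zpow hf hf' (-k))

lemma img_img (f : Equiv.Perm X) (a b : ℤ) (B : Set X) :
    img f a (img f b B) = img f (a + b) B := by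
  simp only [img, ← Set.image_comp, ← Equiv.Perm.coe_mul, ← zpow_add]

@[simp] lemma img_zero (f : Equiv.Perm X) (B : Set X) : img f 0 B = B := by
  simp [img]

lemma img_mono (f : Equiv.Perm X) (k : ℤ) {A B : Set X} (h : A ⊆ B) :
    img f k A ⊆ img f k B := Set.image_mono h

lemma img_one (f : Equiv.Perm X) (B : Set X) : img f 1 B = ⇑f '' B := by simp [img]

lemma img_natCast (f : Equiv.Perm X) (n : ℕ) (B : Set X) :
    img f (-(n : ℤ)) B = ⇑(f ^ n) ⁻¹' B := by
  have h : (f ^ (-(n : ℤ))) = (f ^ n)⁻¹ := by rw [zpow_neg, zpow_natCast]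
  rw [img, h]
  have h2 : ⇑((f ^ n)⁻¹) = ⇑(f ^ n).symm := rfl
  rw [h2, Equiv.image_eq_preimage_symm]
  rfl

lemma measure_img_W_ne {μ : Measure X} {f : Equiv.Perm X} {W : Set X}
    (hdiss : IsDissipative μ f W) (hstar : CondStar μ f) (hstar' : CondStar μ f.symm)
    (k : ℤ) : μ (img f k W) ≠ 0 ∧ μ (img f k W) ≠ ⊤ := by
  obtain ⟨c, hc0, hcT, hc⟩ := hstar
  obtain ⟨c', hc'0, hc'T, hc'⟩ := hstar'
  have measW := hdiss.meas_W
  have hmf := hdiss.meas_f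
  have hmf' := hdiss.meas_symm
  induction k using Int.induction_on with
  | zero => simpa using ⟨hdiss.pos.ne', hdiss.fin.ne⟩
  | succ n ih =>
      set A := img f (n : ℤ) W with hA
      have hmeasA : MeasurableSet A := img_measurableSet hmf hmf' _ measW
      have hnext : img f ((n : ℤ) + 1) W = ⇑f '' A := by
        rw [hA, ← img_one f A, img_img, add_comm]
      have hmeasA1 : MeasurableSet (img f ((n : ℤ) + 1) W) :=
        img_measurableSet hmf hmf' _ measW
      have himg : ⇑f '' A = ⇑f.symm ⁻¹' A := Equiv.image_eq_preimage_symm f A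
      constructor
      · intro h0
        have hpre : ⇑f ⁻¹' (img f ((n : ℤ) + 1) W) = A := by
          rw [hnext, Set.preimage_image_eq A f.injective]
        have := hc _ hmeasA1
        rw [hpre, h0, mul_zero] at this
        exact ih.1 (le_antisymm this zero_le)
      · intro hT
        have := hc' A hmeasA
        rw [← himg, ← hnext] at this
        rw [hT] at this
        exact (ENNReal.mul_ne_top hc'T ih.2) (top_le_iff.mp this)
  | pred n ih =>
      set A := img f (-(n : ℤ)) W with hA
      have hmeasA : MeasurableSet A := img_measurableSet hmf hmf' _ measW
      have hnext : img f (-(n : ℤ) - 1) W = ⇑f ⁻¹' A := by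
        have : img f (-1) A = img f (-(n:ℤ) - 1) W := by
          rw [hA, img_img]; ring_nf
        rw [← this, img, show (f ^ (-1 : ℤ)) = f⁻¹ by simp]
        have h2 : ⇑(f⁻¹) = ⇑f.symm := rfl
        rw [h2, Equiv.image_eq_preimage_symm]
        rfl
      have hmeasA1 : MeasurableSet (img f (-(n : ℤ) - 1) W) :=
        img_measurableSet hmf hmf' _ measW
      constructor
      · intro h0
        have hpre : ⇑f.symm ⁻¹' (img f (-(n : ℤ) - 1) W) = A := by
          rw [hnext]
          ext x
          simp
        have := hc' _ hmeasA1
        rw [hpre, h0, mul_zero] at this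
        exact ih.1 (le_antisymm this zero_le)
      · intro hT
        have := hc A hmeasA
        rw [← hnext, hT] at this
        exact (ENNReal.mul_ne_top hcT ih.2) (top_le_iff.mp this)

end MyHelpers
section KeyEstimate

variable {X : Type*} [MeasurableSpace X] {μ : Measure X} {f : Equiv.Perm X} {W : Set X}
  {K : ℝ≥0∞}

lemma key_pointwise (hdiss : IsDissipative μ f W) (hK0 : 0 < K) (hKfin : K ≠ ⊤)
    (hbd : BoundedDistortion μ f W K) (hstar : CondStar μ f) (hstar' : CondStar μ f.symm)
    (n : ℕ) (ρ : ℝ≥0∞)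
    (hρ : ∀ k : ℤ, μ (img f k W) ≤ ρ ^ n * μ (img f (k + (n : ℤ)) W))
    (k : ℤ) {B : Set X} (hB : MeasurableSet B) (hBk : B ⊆ img f k W) :
    μ (img f (-(n : ℤ)) B) ≤ K * K * ρ ^ n * μ B := by
  have hmf := hdiss.meas_f
  have hmf' := hdiss.meas_symm
  set C := img f (-k) B with hC
  have hCW : C ⊆ W := by
    have := img_mono f (-k) hBk
    rwa [img_img, neg_add_cancel, img_zero] at this
  have hCmeas : MeasurableSet C := img_measurableSet hmf hmf' _ hB
  have hkC : img f k C = B := by rw [hC, img_img, add_neg_cancel, img_zero]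
  set j : ℤ := -(n : ℤ) + k with hj
  have himg : img f (-(n : ℤ)) B = img f j C := by
    rw [hC, img_img, show -(n : ℤ) + k + -k = -(n : ℤ) by ring]
  have h1 : μ (img f j C) * μ W ≤ K * (μ (img f j W) * μ C) := (hbd j C hCmeas hCW).2
  have h2 : (1 / K) * (μ (img f k W) * μ C) ≤ μ (img f k C) * μ W := (hbd k C hCmeas hCW).1
  have h2' : μ (img f k W) * μ C ≤ μ (img f k C) * μ W * K := by
    rw [one_div] at h2
    calc μ (img f k W) * μ C = K * (K⁻¹ * (μ (img f k W) * μ C)) := by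
          rw [← mul_assoc, ENNReal.mul_inv_cancel hK0.ne' hKfin, one_mul]
      _ ≤ K * (μ (img f k C) * μ W) := mul_le_mul_right h2 _
      _ = μ (img f k C) * μ W * K := mul_comm _ _
  have h3 : μ (img f j W) ≤ ρ ^ n * μ (img f k W) := by
    have := hρ j
    rwa [show j + (n : ℤ) = k by omega] at this
  have hWne := measure_img_W_ne hdiss hstar hstar' k
  have hW0 : μ W ≠ 0 := hdiss.pos.ne'
  have hWT : μ W ≠ ⊤ := hdiss.fin.ne
  have main : μ (img f j C) * (μ W * μ (img f k W)) ≤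
      (K * K * ρ ^ n * μ (img f k C)) * (μ W * μ (img f k W)) := by
    calc μ (img f j C) * (μ W * μ (img f k W))
        = (μ (img f j C) * μ W) * μ (img f k W) := by ring
      _ ≤ (K * (μ (img f j W) * μ C)) * μ (img f k W) := mul_le_mul_left h1 _
      _ ≤ (K * ((ρ ^ n * μ (img f k W)) * μ C)) * μ (img f k W) := by gcongr
      _ = (K * ρ ^ n) * ((μ (img f k W) * μ C) * μ (img f k W)) := by ring
      _ ≤ (K * ρ ^ n) * ((μ (img f k C) * μ W * K) * μ (img f k W)) := by gcongr
      _ = (K * K * ρ ^ n * μ (img f k C)) * (μ W * μ (img f k W)) := by ring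
  have hcancel := (ENNReal.mul_le_mul_iff_left
      (mul_ne_zero hW0 hWne.1) (ENNReal.mul_ne_top hWT hWne.2)).mp main
  rw [himg, ← hkC]
  exact hcancel

lemma key_estimate (hdiss : IsDissipative μ f W) (hK0 : 0 < K) (hKfin : K ≠ ⊤)
    (hbd : BoundedDistortion μ f W K) (hstar : CondStar μ f) (hstar' : CondStar μ f.symm)
    (n : ℕ) (ρ : ℝ≥0∞)
    (hρ : ∀ k : ℤ, μ (img f k W) ≤ ρ ^ n * μ (img f (k + (n : ℤ)) W))
    {B : Set X} (hB : MeasurableSet B) :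
    μ (img f (-(n : ℤ)) B) ≤ K * K * ρ ^ n * μ B := by
  have hmf := hdiss.meas_f
  have hmf' := hdiss.meas_symm
  have hBU : B = ⋃ k : ℤ, B ∩ img f k W := by
    rw [← Set.inter_iUnion, hdiss.cover, Set.inter_univ]
  have hmeas : ∀ k : ℤ, MeasurableSet (B ∩ img f k W) :=
    fun k => hB.inter (img_measurableSet hmf hmf' _ hdiss.meas_W)
  have hdisj : Pairwise fun k l : ℤ => Disjoint (B ∩ img f k W) (B ∩ img f l W) :=
    fun k l hkl => ((hdiss.disj hkl).mono Set.inter_subset_right Set.inter_subset_right)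
  have himgU : img f (-(n : ℤ)) B = ⋃ k : ℤ, img f (-(n : ℤ)) (B ∩ img f k W) := by
    conv_lhs => rw [hBU]
    exact Set.image_iUnion
  calc μ (img f (-(n : ℤ)) B)
      = ∑' k : ℤ, μ (img f (-(n : ℤ)) (B ∩ img f k W)) := by
        rw [himgU]
        exact measure_iUnion
          (fun k l hkl => (Set.disjoint_image_iff (Equiv.injective _)).mpr (hdisj hkl))
          (fun k => img_measurableSet hmf hmf' _ (hmeas k))
    _ ≤ ∑' k : ℤ, K * K * ρ ^ n * μ (B ∩ img f k W) := by
        exact ENNReal.tsum_le_tsum fun k =>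
          key_pointwise hdiss hK0 hKfin hbd hstar hstar' n ρ hρ k (hmeas k)
            Set.inter_subset_right
    _ = K * K * ρ ^ n * ∑' k : ℤ, μ (B ∩ img f k W) := ENNReal.tsum_mul_left
    _ = K * K * ρ ^ n * μ B := by
        rw [← measure_iUnion hdisj hmeas, ← hBU]

end KeyEstimate
section OpNorm

variable {X : Type*} [MeasurableSpace X] {μ : Measure X} {f : Equiv.Perm X} {W : Set X}
  {K : ℝ≥0∞} {p : ℝ≥0∞}

lemma qmp_of_condStar {μ : Measure X} {f : Equiv.Perm X} (hmf : Measurable f)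
    (hstar : CondStar μ f) : Measure.QuasiMeasurePreserving ⇑f μ μ := by
  obtain ⟨c, hc0, hcT, hc⟩ := hstar
  refine ⟨hmf, Measure.AbsolutelyContinuous.mk fun s hs h0 => ?_⟩
  rw [Measure.map_apply hmf hs]
  have := hc s hs
  rw [h0, mul_zero] at this
  exact le_antisymm this zero_le

lemma pow_apply_ae [Fact (1 ≤ p)] {T : Lp ℝ p μ ≃L[ℝ] Lp ℝ p μ}
    (hmf : Measurable f) (hstar : CondStar μ f) (hT : RepsComp μ p f T)
    (n : ℕ) (φ : Lp ℝ p μ) :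
    ⇑(((T : Lp ℝ p μ →L[ℝ] Lp ℝ p μ) ^ n) φ) =ᵐ[μ] fun x => (φ : X → ℝ) ((⇑f)^[n] x) := by
  have qmp := qmp_of_condStar hmf hstar
  induction n with
  | zero =>
      simp only [pow_zero, ContinuousLinearMap.one_apply, Function.iterate_zero, id_eq]
      exact Filter.EventuallyEq.rfl
  | succ n ih =>
      have h1 : ((T : Lp ℝ p μ →L[ℝ] Lp ℝ p μ) ^ (n + 1)) φ =
          T (((T : Lp ℝ p μ →L[ℝ] Lp ℝ p μ) ^ n) φ) := by
        rw [pow_succ']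
        rfl
      rw [h1]
      refine (hT _).trans ?_
      have h2 := qmp.ae_eq_comp ih
      refine h2.trans ?_
      apply Filter.EventuallyEq.of_eq
      funext x
      simp [Function.iterate_succ_apply]

lemma opnorm_pow_le [Fact (1 ≤ p)] (hp : p ≠ ⊤)
    (hdiss : IsDissipative μ f W) (hK0 : 0 < K) (hKfin : K ≠ ⊤)
    (hbd : BoundedDistortion μ f W K) (hstar : CondStar μ f) (hstar' : CondStar μ f.symm)
    (T : Lp ℝ p μ ≃L[ℝ] Lp ℝ p μ) (hT : RepsComp μ p f T)
    (n : ℕ) (ρ : ℝ≥0∞) (hρT : ρ ≠ ⊤)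
    (hρ : ∀ k : ℤ, μ (img f k W) ≤ ρ ^ n * μ (img f (k + (n : ℤ)) W)) :
    ‖(T : Lp ℝ p μ →L[ℝ] Lp ℝ p μ) ^ n‖ ≤ (((K * K * ρ ^ n) ^ (1 / p).toReal)).toReal := by
  have hmf := hdiss.meas_f
  have hmf' := hdiss.meas_symm
  set c : ℝ≥0∞ := K * K * ρ ^ n with hc
  have hcT : c ≠ ⊤ := ENNReal.mul_ne_top (ENNReal.mul_ne_top hKfin hKfin)
    (ENNReal.pow_ne_top hρT)
  have hmfn : Measurable ⇑(f ^ n) := by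
    rw [Equiv.Perm.coe_pow]; exact hmf.iterate n
  have hmap : Measure.map ⇑(f ^ n) μ ≤ c • μ := by
    rw [Measure.le_iff]
    intro s hs
    rw [Measure.map_apply hmfn hs, ← img_natCast, Measure.smul_apply, smul_eq_mul]
    exact key_estimate hdiss hK0 hKfin hbd hstar hstar' n ρ hρ hs
  have hbnd : (c ^ (1 / p).toReal).toReal ≤ (c ^ (1 / p).toReal).toReal := le_rfl
  apply ContinuousLinearMap.opNorm_le_bound _ ENNReal.toReal_nonneg
  intro φ
  have hae := pow_apply_ae hmf hstar hT n φ
  rw [Lp.norm_def, Lp.norm_def, eLpNorm_congr_ae hae]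
  have hcomp : (fun x => (φ : X → ℝ) ((⇑f)^[n] x)) = (φ : X → ℝ) ∘ ⇑(f ^ n) := by
    rw [Equiv.Perm.coe_pow]; rfl
  rw [hcomp, ← eLpNorm_map_measure (Lp.stronglyMeasurable φ).aestronglyMeasurable
      hmfn.aemeasurable]
  have h1 : eLpNorm (⇑φ) p (Measure.map (⇑(f ^ n)) μ) ≤ eLpNorm (⇑φ) p (c • μ) :=
    eLpNorm_mono_measure _ hmap
  have h2 : eLpNorm (⇑φ) p (c • μ) = c ^ (1 / p).toReal * eLpNorm (⇑φ) p μ := by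
    rw [eLpNorm_smul_measure_of_ne_top hp]; rfl
  calc (eLpNorm (⇑φ) p (Measure.map (⇑(f ^ n)) μ)).toReal
      ≤ (c ^ (1 / p).toReal * eLpNorm (⇑φ) p μ).toReal := by
        apply ENNReal.toReal_mono
        · exact ENNReal.mul_ne_top
            (ENNReal.rpow_ne_top_of_nonneg ENNReal.toReal_nonneg hcT)
            (Lp.eLpNorm_ne_top φ)
        · rw [← h2]; exact h1
    _ = (c ^ (1 / p).toReal).toReal * (eLpNorm (⇑φ) p μ).toReal := ENNReal.toReal_mul

end OpNorm
/-- Theorem SS, part 1: if condition 𝓗𝓒 holds, then the composition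
operator `T_f` on `L^p(X,μ)` has spectral radius `lim ‖T_f^n‖^{1/n} < 1`
(it is a contraction). -/
theorem contraction_of_condHC
    {X : Type*} [MeasurableSpace X] (μ : Measure X) (f : Equiv.Perm X) (W : Set X)
    (p : ℝ≥0∞) [Fact (1 ≤ p)] (hp : p ≠ ⊤)
    (hdiss : IsDissipative μ f W)
    (K : ℝ≥0∞) (hK0 : 0 < K) (hKfin : K ≠ ⊤)
    (hbd : BoundedDistortion μ f W K)
    (hstar : CondStar μ f) (hstar' : CondStar μ f.symm)
    (T : Lp ℝ p μ ≃L[ℝ] Lp ℝ p μ) (hT : RepsComp μ p f T)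
    (hHC : CondHC μ f W) :
    SpectralRadiusLtOne (T : Lp ℝ p μ →L[ℝ] Lp ℝ p μ) := by
  have hp1 : 1 ≤ p := Fact.out
  have hp0 : p ≠ 0 := (lt_of_lt_of_le zero_lt_one hp1).ne'
  unfold SpectralRadiusLtOne
  set A : Lp ℝ p μ →L[ℝ] Lp ℝ p μ := (T : Lp ℝ p μ →L[ℝ] Lp ℝ p μ) with hA
  set S : Lp ℝ p μ →L[ℝ] Lp ℝ p μ := (T.symm : Lp ℝ p μ →L[ℝ] Lp ℝ p μ) with hS
  -- a nonzero vector
  set x₀ : Lp ℝ p μ := indicatorConstLp p hdiss.meas_W hdiss.fin.ne (1 : ℝ) with hx₀def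
  have hx₀ : x₀ ≠ 0 := by
    have hn : ‖x₀‖ = ‖(1 : ℝ)‖ * (μ W).toReal ^ (1 / p.toReal) :=
      norm_indicatorConstLp hp0 hp
    have hWpos : 0 < (μ W).toReal := ENNReal.toReal_pos hdiss.pos.ne' hdiss.fin.ne
    have : 0 < ‖x₀‖ := by rw [hn, norm_one, one_mul]; positivity
    exact norm_pos_iff.mp this
  have hx₀pos : 0 < ‖x₀‖ := norm_pos_iff.mpr hx₀
  have hAinj : ∀ y : Lp ℝ p μ, y ≠ 0 → A y ≠ 0 := by
    intro y hy h0
    exact hy (T.injective (by rw [show T y = A y from rfl, h0, map_zero]))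
  have hpowx : ∀ n : ℕ, (A ^ n) x₀ ≠ 0 := by
    intro n
    induction n with
    | zero => simpa using hx₀
    | succ n ih =>
        rw [pow_succ', ContinuousLinearMap.mul_apply]
        exact hAinj _ ih
  have hnormA : ∀ n : ℕ, 0 < ‖A ^ n‖ := by
    intro n
    refine norm_pos_iff.mpr fun h0 => hpowx n ?_
    rw [h0, ContinuousLinearMap.zero_apply]
  set u : ℕ → ℝ := fun n => Real.log ‖A ^ n‖ with hu
  have hsub : Subadditive u := by
    intro m n
    have h1 : ‖A ^ (m + n)‖ ≤ ‖A ^ m‖ * ‖A ^ n‖ := by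
      rw [pow_add]; exact norm_mul_le _ _
    have h2 := Real.log_le_log (hnormA (m + n)) h1
    rwa [Real.log_mul (hnormA m).ne' (hnormA n).ne'] at h2
  -- inverse bound
  have hAS1 : A * S = 1 := by
    refine ContinuousLinearMap.ext fun x => ?_
    rw [ContinuousLinearMap.mul_apply, ContinuousLinearMap.one_apply]
    show T (T.symm x) = x
    exact T.apply_symm_apply x
  have hAS : ∀ n : ℕ, (A ^ n) * (S ^ n) = 1 := by
    intro n
    induction n with
    | zero => simp
    | succ n ih =>
        rw [pow_succ' A, pow_succ S, mul_assoc A (A ^ n) _,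
          ← mul_assoc (A ^ n) (S ^ n) S, ih, one_mul, hAS1]
  have hS0 : S x₀ ≠ 0 := by
    intro h
    exact hx₀ (T.symm.injective (by rw [show T.symm x₀ = S x₀ from rfl, h, map_zero]))
  have hSpos : 0 < ‖S‖ := by
    refine norm_pos_iff.mpr fun h0 => hS0 ?_
    rw [h0, ContinuousLinearMap.zero_apply]
  have hlow : ∀ n : ℕ, 0 < n → (‖S‖ ^ n)⁻¹ ≤ ‖A ^ n‖ := by
    intro n hn
    have h1 : ‖x₀‖ ≤ ‖A ^ n‖ * (‖S‖ ^ n * ‖x₀‖) := by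
      calc ‖x₀‖ = ‖((A ^ n) * (S ^ n)) x₀‖ := by rw [hAS n, ContinuousLinearMap.one_apply]
        _ = ‖(A ^ n) ((S ^ n) x₀)‖ := by rw [ContinuousLinearMap.mul_apply]
        _ ≤ ‖A ^ n‖ * ‖(S ^ n) x₀‖ := ContinuousLinearMap.le_opNorm _ _
        _ ≤ ‖A ^ n‖ * (‖S ^ n‖ * ‖x₀‖) := by
            gcongr
            exact ContinuousLinearMap.le_opNorm _ _
        _ ≤ ‖A ^ n‖ * (‖S‖ ^ n * ‖x₀‖) := by
            gcongr
            exact norm_pow_le' S hn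
    have h2 : 1 ≤ ‖A ^ n‖ * ‖S‖ ^ n := by
      have h3 : 1 * ‖x₀‖ ≤ (‖A ^ n‖ * ‖S‖ ^ n) * ‖x₀‖ := by
        rw [one_mul]; linarith [h1, mul_assoc ‖A ^ n‖ (‖S‖ ^ n) ‖x₀‖]
      exact le_of_mul_le_mul_right (by linarith) hx₀pos
    have hSn : (0 : ℝ) < ‖S‖ ^ n := pow_pos hSpos n
    rw [inv_eq_one_div, div_le_iff₀ hSn]
    linarith
  have hbdd : BddBelow (Set.range fun n : ℕ => u n / n) := by
    refine ⟨min 0 (-Real.log ‖S‖), ?_⟩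
    rintro x ⟨n, rfl⟩
    rcases Nat.eq_zero_or_pos n with hn | hn
    · subst hn
      simp only [Nat.cast_zero, _root_.div_zero]
      exact min_le_left _ _
    · have hpos : (0 : ℝ) < n := by exact_mod_cast hn
      refine le_trans (min_le_right _ _) ?_
      rw [le_div_iff₀ hpos]
      have h4 := Real.log_le_log (by positivity) (hlow n hn)
      rw [Real.log_inv, Real.log_pow] at h4
      linarith
  -- extract ρ from condition HC
  obtain ⟨ρ, hLρ, hρ1⟩ := exists_between hHC
  have hρT : ρ ≠ ⊤ := (hρ1.trans ENNReal.one_lt_top).ne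
  have hev1 : ∀ᶠ n : ℕ in atTop,
      (⨆ k : ℤ, (μ (img f k W) / μ (img f (k + (n : ℤ)) W)) ^ (1 / (n : ℝ))) < ρ :=
    eventually_lt_of_limsup_lt hLρ
  have hWne := measure_img_W_ne hdiss hstar hstar'
  have hρn : ∀ n : ℕ, 1 ≤ n →
      ((⨆ k : ℤ, (μ (img f k W) / μ (img f (k + (n : ℤ)) W)) ^ (1 / (n : ℝ))) < ρ) →
      ∀ k : ℤ, μ (img f k W) ≤ ρ ^ n * μ (img f (k + (n : ℤ)) W) := by
    intro n hn hsup k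
    have h1 : (μ (img f k W) / μ (img f (k + (n : ℤ)) W)) ^ (1 / (n : ℝ)) < ρ :=
      lt_of_le_of_lt (le_iSup (fun k : ℤ =>
        (μ (img f k W) / μ (img f (k + (n : ℤ)) W)) ^ (1 / (n : ℝ))) k) hsup
    have hne : ((n : ℝ)) ≠ 0 := by
      have : (0 : ℝ) < n := by exact_mod_cast hn
      exact this.ne'
    have h2 : μ (img f k W) / μ (img f (k + (n : ℤ)) W) ≤ ρ ^ (n : ℝ) := by
      have h3 := ENNReal.rpow_le_rpow h1.le (by positivity : (0 : ℝ) ≤ (n : ℝ))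
      rwa [← ENNReal.rpow_mul, one_div, inv_mul_cancel₀ hne, ENNReal.rpow_one] at h3
    rw [ENNReal.rpow_natCast] at h2
    have h4 := (ENNReal.div_le_iff (hWne (k + (n : ℤ))).1 (hWne (k + (n : ℤ))).2).mp h2
    exact h4
  have htend0 : Tendsto (fun n : ℕ => K * K * ρ ^ n) atTop (𝓝 0) := by
    have h5 := ENNReal.tendsto_pow_atTop_nhds_zero_of_lt_one hρ1
    have h6 := ENNReal.Tendsto.const_mul (a := K * K) h5
      (Or.inr (ENNReal.mul_ne_top hKfin hKfin))
    simpa using h6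
  have hev2 : ∀ᶠ n : ℕ in atTop, K * K * ρ ^ n < 1 :=
    htend0.eventually_lt_const zero_lt_one
  obtain ⟨N, hN1, hNsup, hNc⟩ : ∃ N : ℕ, 1 ≤ N ∧
      ((⨆ k : ℤ, (μ (img f k W) / μ (img f (k + (N : ℤ)) W)) ^ (1 / (N : ℝ))) < ρ) ∧
      K * K * ρ ^ N < 1 := by
    obtain ⟨N, h1, h2, h3⟩ := ((eventually_ge_atTop 1).and (hev1.and hev2)).exists
    exact ⟨N, h1, h2, h3⟩
  have hpe : 0 < (1 / p).toReal := by
    refine ENNReal.toReal_pos ?_ ?_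
    · simp [ENNReal.div_eq_zero_iff, hp]
    · simp [ENNReal.div_eq_top, hp0]
  have hbN : ‖A ^ N‖ ≤ (((K * K * ρ ^ N) ^ (1 / p).toReal)).toReal := by
    have := opnorm_pow_le hp hdiss hK0 hKfin hbd hstar hstar' T hT N ρ hρT
      (hρn N hN1 hNsup)
    rwa [← hA] at this
  have hcfin : K * K * ρ ^ N ≠ ⊤ :=
    ENNReal.mul_ne_top (ENNReal.mul_ne_top hKfin hKfin) (ENNReal.pow_ne_top hρT)
  have hcN1 : (((K * K * ρ ^ N) ^ (1 / p).toReal)).toReal < 1 := by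
    have h1 : (K * K * ρ ^ N) ^ (1 / p).toReal < 1 := ENNReal.rpow_lt_one hNc hpe
    have h2 := (ENNReal.toReal_lt_toReal
      (ENNReal.rpow_ne_top_of_nonneg hpe.le hcfin) ENNReal.one_ne_top).mpr h1
    simpa using h2
  have hAN1 : ‖A ^ N‖ < 1 := lt_of_le_of_lt hbN hcN1
  have hlimneg : hsub.lim < 0 := by
    have hmem : u N / N ∈ (fun n : ℕ => u n / n) '' Set.Ici 1 := ⟨N, hN1, rfl⟩
    have hle : hsub.lim ≤ u N / N := by rw [Subadditive.lim]; exact csInf_le (hbdd.mono (Set.image_subset_range _ _)) hmem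
    have hneg : u N / N < 0 := by
      have hNpos : (0 : ℝ) < N := by exact_mod_cast hN1
      exact div_neg_of_neg_of_pos (Real.log_neg (hnormA N) hAN1) hNpos
    linarith
  refine ⟨Real.exp hsub.lim, Real.exp_lt_one_iff.mpr hlimneg, ?_⟩
  have htendu := hsub.tendsto_lim hbdd
  have htexp : Tendsto (fun n : ℕ => Real.exp (u n / n)) atTop (𝓝 (Real.exp hsub.lim)) :=
    (Real.continuous_exp.tendsto _).comp htendu
  have heq : (fun n : ℕ => Real.exp (u n / n)) =ᶠ[atTop]
      fun n : ℕ => ‖A ^ n‖ ^ (1 / (n : ℝ)) := by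
    filter_upwards [eventually_ge_atTop 1] with n hn
    rw [Real.rpow_def_of_pos (hnormA n), mul_one_div]
  exact htexp.congr' heq

end GHShadow
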